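/- For pure octonions a, b, x, one has (x*a)*b + (x*b)*a = 2⟨a,x⟩b + 2⟨b,x⟩a - 4⟨a,b⟩x. -/
import Mathlib


/-- An octonion algebra over `k`: an 8-dimensional unital (not necessarily associative)
`k`-algebra with a nondegenerate multiplicative quadratic form `N`. -/
structure OctonionAlgebra (k : Type) [Field k] (A : Type) [AddCommGroup A] [Module k A] where
  mul : A → A → A
  e : A
  N : A → k
  add_mul' : ∀ a b c : A, mul (a + b) c = mul a c + mul b c
  mul_add' : ∀ a b c : A, mul a (b + c) = mul a b + mul a c
  smul_mul' : ∀ (t : k) (a b : A), mul (t • a) b = t • mul a b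
  mul_smul' : ∀ (t : k) (a b : A), mul a (t • b) = t • mul a b
  one_mul' : ∀ a : A, mul e a = a
  mul_one' : ∀ a : A, mul a e = a
  dim_eq : Module.finrank k A = 8
  N_smul : ∀ (t : k) (a : A), N (t • a) = t ^ 2 * N a
  polar_add_left : ∀ a b c : A,
    N (a + b + c) - N (a + b) - N c = (N (a + c) - N a - N c) + (N (b + c) - N b - N c)
  polar_smul_left : ∀ (t : k) (a b : A),
    N (t • a + b) - N (t • a) - N b = t * (N (a + b) - N a - N b)
  nondeg : ∀ a : A, (∀ b : A, N (a + b) - N a - N b = 0) → a = 0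
  N_mul : ∀ a b : A, N (mul a b) = N a * N b

namespace OctonionAlgebra

variable {k : Type} [Field k] {A : Type} [AddCommGroup A] [Module k A]

/-- The bilinear form associated to the norm: `⟨x,y⟩ = N(x+y) - N(x) - N(y)`. -/
def inner (O : OctonionAlgebra k A) (x y : A) : k := O.N (x + y) - O.N x - O.N y

/-- The standard involution `x̄ = ⟨x,e⟩e - x`. -/
def conj (O : OctonionAlgebra k A) (x : A) : A := O.inner x O.e • O.e - x

/-- The Malcev product `a*b = ab - ba`. -/
def malcev (O : OctonionAlgebra k A) (a b : A) : A := O.mul a b - O.mul b a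

/-- The associator `{a,x,b} = (ax)b - a(xb)`. -/
def assoc (O : OctonionAlgebra k A) (a x b : A) : A :=
  O.mul (O.mul a x) b - O.mul a (O.mul x b)

/-- The standard derivation `D_{a,b} = [L_a,L_b] + [L_a,R_b] + [R_a,R_b]`, as a function. -/
def D (O : OctonionAlgebra k A) (a b x : A) : A :=
  O.mul a (O.mul b x) - O.mul b (O.mul a x)
  + O.mul a (O.mul x b) - O.mul (O.mul a x) b
  + O.mul (O.mul x b) a - O.mul (O.mul x a) b

end OctonionAlgebra

namespace OctonionAlgebra

variable {k : Type} [Field k] {A : Type} [AddCommGroup A] [Module k A]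
  (O : OctonionAlgebra k A)

lemma inner_symm (x y : A) : O.inner x y = O.inner y x := by
  simp [inner, add_comm]; ring

lemma inner_add_left (x y z : A) :
    O.inner (x + y) z = O.inner x z + O.inner y z := O.polar_add_left x y z

lemma inner_smul_left (t : k) (x y : A) :
    O.inner (t • x) y = t * O.inner x y := by
  have := O.polar_smul_left t x y
  simpa [inner] using this

lemma inner_zero_left (y : A) : O.inner 0 y = 0 := by
  have := O.inner_smul_left 0 0 y
  simpa using this

lemma inner_neg_left (x y : A) : O.inner (-x) y = -O.inner x y := by
  have := O.inner_smul_left (-1) x y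
  simpa using this

lemma inner_sub_left (x y z : A) :
    O.inner (x - y) z = O.inner x z - O.inner y z := by
  rw [sub_eq_add_neg, O.inner_add_left, O.inner_neg_left, sub_eq_add_neg]

lemma inner_add_right (x y z : A) :
    O.inner x (y + z) = O.inner x y + O.inner x z := by
  rw [O.inner_symm, O.inner_add_left, O.inner_symm y, O.inner_symm z]

lemma inner_smul_right (t : k) (x y : A) :
    O.inner x (t • y) = t * O.inner x y := by
  rw [O.inner_symm, O.inner_smul_left, O.inner_symm]

lemma inner_sub_right (x y z : A) :
    O.inner x (y - z) = O.inner x y - O.inner x z := by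
  rw [O.inner_symm, O.inner_sub_left, O.inner_symm y, O.inner_symm z]

lemma zero_mul' (b : A) : O.mul 0 b = 0 := by
  have := O.smul_mul' 0 0 b
  simpa using this

lemma mul_zero' (a : A) : O.mul a 0 = 0 := by
  have := O.mul_smul' 0 a 0
  simpa using this

/-- The norm of the identity is `1`. -/
lemma N_e : O.N O.e = 1 := by
  have h : O.N O.e * O.N O.e = O.N O.e := by
    conv_rhs => rw [← O.mul_one' O.e]
    rw [O.N_mul]
  by_contra hne
  -- then N e = 0
  have he0 : O.N O.e = 0 := by
    have h' : O.N O.e * (O.N O.e - 1) = 0 := by linear_combination h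
    rcases mul_eq_zero.mp h' with h0 | h1
    · exact h0
    · exact absurd (show O.N O.e = 1 by linear_combination h1) hne
  -- hence N vanishes identically
  have hN0 : ∀ a : A, O.N a = 0 := by
    intro a
    have : O.N a = O.N a * O.N O.e := by
      conv_lhs => rw [← O.mul_one' a, O.N_mul]
    rw [this, he0, mul_zero]
  have hall : ∀ a : A, a = 0 := by
    intro a
    exact O.nondeg a (fun b => by simp [hN0])
  have : Subsingleton A := subsingleton_of_forall_eq 0 hall
  have := O.dim_eq
  rw [Module.finrank_zero_of_subsingleton] at this
  exact absurd this (by norm_num)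

lemma normL (a b c : A) :
    O.inner (O.mul a b) (O.mul a c) = O.N a * O.inner b c := by
  have h := O.N_mul a (b + c)
  rw [O.mul_add'] at h
  simp only [inner]
  rw [h, O.N_mul, O.N_mul]
  ring

lemma normR (a b c : A) :
    O.inner (O.mul b a) (O.mul c a) = O.N a * O.inner b c := by
  have h := O.N_mul (b + c) a
  rw [O.add_mul'] at h
  simp only [inner]
  rw [h, O.N_mul, O.N_mul]
  ring

lemma N_add (a b : A) : O.N (a + b) = O.N a + O.N b + O.inner a b := by
  simp [inner]

lemma idL (x y z : A) :
    O.inner (O.mul x y) z + O.inner y (O.mul x z) = O.inner x O.e * O.inner y z := by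
  have h := O.normL (x + O.e) y z
  rw [O.add_mul', O.add_mul', O.one_mul', O.one_mul', O.inner_add_left,
    O.inner_add_right, O.inner_add_right, O.normL, O.N_add, O.N_e] at h
  linear_combination h

lemma idR (x y z : A) :
    O.inner (O.mul y x) z + O.inner y (O.mul z x) = O.inner x O.e * O.inner y z := by
  have h := O.normR (x + O.e) y z
  rw [O.mul_add', O.mul_add', O.mul_one', O.mul_one', O.inner_add_left,
    O.inner_add_right, O.inner_add_right, O.normR, O.N_add, O.N_e] at h
  linear_combination h

lemma ext' (a b : A) (h : ∀ z : A, O.inner a z = O.inner b z) : a = b := by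
  have h0 : a - b = 0 := by
    apply O.nondeg
    intro z
    have := h z
    have hs : O.inner (a - b) z = 0 := by
      rw [O.inner_sub_left, this, sub_self]
    simpa [inner] using hs
  exact sub_eq_zero.mp h0

/-- Right alternativity in closed form: `(yx)x = ⟨x,e⟩(yx) - N(x)y`. -/
lemma RA (y x : A) :
    O.mul (O.mul y x) x = O.inner x O.e • O.mul y x - O.N x • y := by
  apply O.ext'
  intro z
  have h1 := O.idR x (O.mul y x) z
  have h2 := O.normR x y z
  rw [O.inner_sub_left, O.inner_smul_left, O.inner_smul_left]
  linear_combination h1 - h2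

/-- Linearized right alternativity. -/
lemma RA2 (y a b : A) :
    O.mul (O.mul y a) b + O.mul (O.mul y b) a
      = O.inner b O.e • O.mul y a + O.inner a O.e • O.mul y b - O.inner a b • y := by
  have h := O.RA y (a + b)
  simp only [O.mul_add', O.add_mul'] at h
  rw [O.N_add, O.inner_add_left] at h
  have ha := O.RA y a
  have hb := O.RA y b
  linear_combination (norm := module) h - ha - hb

/-- Anticommutator formula. -/
lemma anticomm (a b : A) :
    O.mul a b + O.mul b a
      = O.inner b O.e • a + O.inner a O.e • b - O.inner a b • O.e := by
  have h := O.RA2 O.e a b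
  simpa [O.one_mul'] using h

lemma neg_mul'' (u v : A) : O.mul (-u) v = -O.mul u v := by
  have := O.smul_mul' (-1) u v
  simpa using this

lemma mul_neg'' (u v : A) : O.mul u (-v) = -O.mul u v := by
  have := O.mul_smul' (-1) u v
  simpa using this

lemma sub_mul'' (u v w : A) : O.mul (u - v) w = O.mul u w - O.mul v w := by
  rw [sub_eq_add_neg, O.add_mul', O.neg_mul'', sub_eq_add_neg]

lemma mul_sub'' (u v w : A) : O.mul u (v - w) = O.mul u v - O.mul u w := by
  rw [sub_eq_add_neg, O.mul_add', O.mul_neg'', sub_eq_add_neg]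

end OctonionAlgebra

/-- For pure octonions `a, b, x`:
`(x*a)*b + (x*b)*a = 2⟨a,x⟩b + 2⟨b,x⟩a - 4⟨a,b⟩x`. -/
theorem stmt3 {k A : Type} [Field k] [AddCommGroup A] [Module k A]
    (h2 : (2 : k) ≠ 0) (O : OctonionAlgebra k A) :
    ∀ a b x : A, O.inner a O.e = 0 → O.inner b O.e = 0 → O.inner x O.e = 0 →
      O.malcev (O.malcev x a) b + O.malcev (O.malcev x b) a
        = (2 * O.inner a x) • b + (2 * O.inner b x) • a - (4 * O.inner a b) • x := by
  intro a b x ha hb hx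
  -- anticommutation relations for pure elements
  have hax : O.mul a x = -(O.inner a x • O.e) - O.mul x a := by
    have h := O.anticomm x a
    rw [ha, hx, zero_smul, zero_smul, zero_add, zero_sub, O.inner_symm x a] at h
    linear_combination (norm := module) h
  have hbx : O.mul b x = -(O.inner b x • O.e) - O.mul x b := by
    have h := O.anticomm x b
    rw [hb, hx, zero_smul, zero_smul, zero_add, zero_sub, O.inner_symm x b] at h
    linear_combination (norm := module) h
  have hA := O.RA2 x a b
  have hB := O.anticomm (O.mul x a) b
  have hC := O.anticomm (O.mul x b) a
  have k1 : O.inner (O.mul x a) O.e + O.inner a x = 0 := by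
    have h := O.idL x a O.e
    rw [O.mul_one', hx, zero_mul] at h
    linear_combination h
  have k2 : O.inner (O.mul x b) O.e + O.inner b x = 0 := by
    have h := O.idL x b O.e
    rw [O.mul_one', hx, zero_mul] at h
    linear_combination h
  have k3 : O.inner (O.mul x a) b + O.inner (O.mul x b) a = 0 := by
    have h := O.idL x a b
    rw [hx, zero_mul, O.inner_symm a (O.mul x b)] at h
    exact h
  simp only [ha, hb, zero_smul] at hA hB hC
  simp only [OctonionAlgebra.malcev]
  rw [hax, hbx]
  simp only [O.sub_mul'', O.mul_sub'', O.neg_mul'', O.mul_neg'', O.smul_mul',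
    O.mul_smul', O.one_mul', O.mul_one']
  linear_combination (norm := module) (4 : k) • hA - (2 : k) • hB - (2 : k) • hC
    - (2 : k) • (k1 • b) - (2 : k) • (k2 • a) + (2 : k) • (k3 • O.e)
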